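/- arXiv:1407.6288 — 3 statements merged into one kernel-verified Lean document; each statement's English description precedes it below -/
import Mathlib

section
/- Let V be a Laplace(0,1) random variable. Then for every real c, E[sign(V + c) · V] = (1 + |c|) e^{-|c|}, and in particular 0 < E[sign(V + c) · V] ≤ 1. -/
open MeasureTheory ProbabilityTheory Real Set Filter Topology

/-- Sign function with `sgn 0 = 1`. -/
noncomputable def sgn (x : ℝ) : ℝ := if x < 0 then -1 else 1

/-- The Laplace(0,1) distribution: density `v ↦ (1/2) exp (-|v|)` w.r.t. Lebesgue. -/
noncomputable def laplaceMeasure : Measure ℝ :=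
  (volume : Measure ℝ).withDensity fun v => ENNReal.ofReal ((1 : ℝ) / 2 * Real.exp (-|v|))

noncomputable def f0 (v : ℝ) : ℝ := 1 / 2 * Real.exp (-|v|) * v

lemma f0_cont : Continuous f0 :=
  (continuous_const.mul (continuous_abs.neg.rexp)).mul continuous_id

lemma f0_odd (x : ℝ) : f0 (-x) = -f0 x := by simp [f0]; try ring

lemma meas_sgn : Measurable sgn := by
  unfold sgn
  exact Measurable.ite measurableSet_Iio measurable_const measurable_const

lemma hasDeriv_negexp (x : ℝ) :
    HasDerivAt (fun y : ℝ => -(1 + y) * Real.exp (-y)) (x * Real.exp (-x)) x := by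
  have h1 : HasDerivAt (fun y : ℝ => -(1 + y)) (-1) x := by
    exact ((hasDerivAt_id x).const_add 1).neg
  have h2 : HasDerivAt (fun y : ℝ => Real.exp (-y)) (-Real.exp (-x)) x := by
    convert (hasDerivAt_neg x).exp using 1; ring
  exact (h1.fun_mul h2).congr_deriv (by ring)

lemma tendsto_negexp : Tendsto (fun x : ℝ => -(1 + x) * Real.exp (-x)) atTop (𝓝 0) := by
  have h1 := Real.tendsto_exp_neg_atTop_nhds_zero
  have h2 := Real.tendsto_pow_mul_exp_neg_atTop_nhds_zero 1
  have h := (h1.add h2).neg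
  simp only [pow_one, add_zero, neg_zero] at h
  refine h.congr fun x => ?_
  ring

lemma intA_nonneg (t : ℝ) (ht : 0 ≤ t) :
    IntegrableOn (fun x => x * Real.exp (-x)) (Set.Ioi t) ∧
      ∫ x in Set.Ioi t, x * Real.exp (-x) = (1 + t) * Real.exp (-t) := by
  have hcont : ContinuousWithinAt (fun y : ℝ => -(1 + y) * Real.exp (-y)) (Set.Ici t) t :=
    ((continuous_const.add continuous_id).neg.mul continuous_neg.rexp).continuousWithinAt
  have hderiv : ∀ x ∈ Set.Ioi t, HasDerivAt (fun y : ℝ => -(1 + y) * Real.exp (-y))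
      (x * Real.exp (-x)) x := fun x _ => hasDeriv_negexp x
  have hnn : ∀ x ∈ Set.Ioi t, 0 ≤ x * Real.exp (-x) := fun x hx =>
    mul_nonneg (le_trans ht (le_of_lt hx)) (Real.exp_pos _).le
  have hint := integrableOn_Ioi_deriv_of_nonneg hcont hderiv hnn tendsto_negexp
  refine ⟨hint, ?_⟩
  have := integral_Ioi_of_hasDerivAt_of_tendsto hcont hderiv hint tendsto_negexp
  rw [this]
  ring

lemma int_xexp (a b : ℝ) :
    ∫ x in a..b, x * Real.exp x = (b - 1) * Real.exp b - (a - 1) * Real.exp a := by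
  have hd : ∀ x ∈ Set.uIcc a b, HasDerivAt (fun y : ℝ => (y - 1) * Real.exp y)
      (x * Real.exp x) x := by
    intro x _
    have h1 : HasDerivAt (fun y : ℝ => y - 1) 1 x := by
      simpa using (hasDerivAt_id x).sub_const 1
    have h2 := Real.hasDerivAt_exp x
    exact (h1.fun_mul h2).congr_deriv (by ring)
  have hi : IntervalIntegrable (fun x => x * Real.exp x) volume a b :=
    (continuous_id.mul Real.continuous_exp).intervalIntegrable a b
  exact intervalIntegral.integral_eq_sub_of_hasDerivAt hd hi

lemma intA_ge (t : ℝ) (ht : 0 ≤ t) :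
    IntegrableOn f0 (Set.Ioi t) ∧
      ∫ x in Set.Ioi t, f0 x = 1 / 2 * (1 + t) * Real.exp (-t) := by
  have hA := intA_nonneg t ht
  have hcong : Set.EqOn (fun x => 1 / 2 * (x * Real.exp (-x))) f0 (Set.Ioi t) := by
    intro x hx
    have hx0 : 0 ≤ x := le_trans ht (le_of_lt hx)
    simp only [f0, abs_of_nonneg hx0]
    ring
  constructor
  · exact IntegrableOn.congr_fun (hA.1.const_mul (1 / 2)) hcong measurableSet_Ioi
  · rw [setIntegral_congr_fun measurableSet_Ioi hcong.symm, integral_const_mul, hA.2]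
    ring

lemma intA (t : ℝ) :
    IntegrableOn f0 (Set.Ioi t) ∧
      ∫ x in Set.Ioi t, f0 x = 1 / 2 * (1 + |t|) * Real.exp (-|t|) := by
  rcases le_or_gt 0 t with ht | ht
  · have := intA_ge t ht
    rwa [abs_of_nonneg ht]
  · have h0 := intA_ge 0 le_rfl
    have hIoc : IntegrableOn f0 (Set.Ioc t 0) := f0_cont.integrableOn_Ioc
    have hunion : Set.Ioc t 0 ∪ Set.Ioi (0 : ℝ) = Set.Ioi t := Set.Ioc_union_Ioi_eq_Ioi ht.le
    have hIocval : ∫ x in Set.Ioc t 0, f0 x = 1 / 2 * (-1 - (t - 1) * Real.exp t) := by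
      have hcong : Set.EqOn f0 (fun x => 1 / 2 * (x * Real.exp x)) (Set.Ioc t 0) := by
        intro x hx
        have hx0 : x ≤ 0 := hx.2
        simp only [f0, abs_of_nonpos hx0, neg_neg]
        ring
      rw [setIntegral_congr_fun measurableSet_Ioc hcong,
        ← intervalIntegral.integral_of_le ht.le, intervalIntegral.integral_const_mul, int_xexp]
      simp only [Real.exp_zero, mul_one]
      ring
    constructor
    · rw [← hunion]
      exact hIoc.union h0.1
    · rw [← hunion, setIntegral_union (Set.Ioc_disjoint_Ioi le_rfl) measurableSet_Ioi hIoc h0.1,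
        hIocval, h0.2, abs_of_nonpos ht.le]
      simp only [neg_zero, Real.exp_zero, mul_one, neg_neg]
      ring

lemma intB (t : ℝ) :
    IntegrableOn f0 (Set.Iic t) ∧
      ∫ x in Set.Iic t, f0 x = -(1 / 2 * (1 + |t|) * Real.exp (-|t|)) := by
  have hA := intA (-t)
  have hAci : IntegrableOn f0 (Set.Ici (-t)) := by
    rw [integrableOn_Ici_iff_integrableOn_Ioi]
    exact hA.1
  have hemb : MeasurableEmbedding (fun x : ℝ => -x) :=
    (Homeomorph.neg ℝ).isClosedEmbedding.measurableEmbedding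
  constructor
  · have hmap : volume.restrict (Set.Iic t) =
        Measure.map (fun x : ℝ => -x) (volume.restrict (Set.Ici (-t))) := by
      conv_lhs => rw [← Measure.map_neg_eq_self (volume : Measure ℝ)]
      rw [Measure.restrict_map measurable_neg measurableSet_Iic]
      congr 1
      ext x
      simp
    rw [IntegrableOn, hmap, hemb.integrable_map_iff]
    have : (f0 ∘ fun x : ℝ => -x) = fun x => -f0 x := by
      ext x; simp [Function.comp, f0_odd]
    rw [this]
    exact hAci.neg
  · have h1 : ∫ x in Set.Iic t, f0 x = -∫ x in Set.Iic t, f0 (-x) := by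
      rw [← integral_neg]
      refine integral_congr_ae (Filter.EventuallyEq.of_eq ?_)
      ext x
      rw [f0_odd, neg_neg]
    rw [h1, integral_comp_neg_Iic, hA.2, abs_neg]

/-- If `V` is Laplace(0,1) then for every real `c`,
`E[sign(V + c) · V] = (1 + |c|) e^{-|c|}`, and `0 < E[sign(V + c) · V] ≤ 1`. -/
theorem stmt2 {Ω : Type*} [MeasurableSpace Ω] (μ : Measure Ω) [IsProbabilityMeasure μ]
    (V : Ω → ℝ) (hV : Measurable V) (hVlaw : μ.map V = laplaceMeasure) (c : ℝ) :
    (∫ ω, sgn (V ω + c) * V ω ∂μ = (1 + |c|) * Real.exp (-|c|)) ∧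
    0 < ∫ ω, sgn (V ω + c) * V ω ∂μ ∧ (∫ ω, sgn (V ω + c) * V ω ∂μ) ≤ 1 := by
  have key : ∫ ω, sgn (V ω + c) * V ω ∂μ = (1 + |c|) * Real.exp (-|c|) := by
    have hg : Measurable fun v : ℝ => sgn (v + c) * v :=
      (meas_sgn.comp (measurable_id.add_const c)).mul measurable_id
    have h1 : ∫ ω, sgn (V ω + c) * V ω ∂μ = ∫ v, sgn (v + c) * v ∂laplaceMeasure := by
      rw [← hVlaw]
      exact (integral_map hV.aemeasurable hg.aestronglyMeasurable).symm
    set d : ℝ → NNReal := fun v => ((1 : ℝ) / 2 * Real.exp (-|v|)).toNNReal with hd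
    have hdmeas : Measurable d :=
      (measurable_const.mul (Real.measurable_exp.comp measurable_abs.neg)).real_toNNReal
    have h2 : laplaceMeasure = volume.withDensity fun v => ((d v : NNReal) : ENNReal) := rfl
    have h3 : ∫ v, sgn (v + c) * v ∂laplaceMeasure = ∫ v, d v • (sgn (v + c) * v) := by
      rw [h2]
      exact integral_withDensity_eq_integral_smul hdmeas _
    set F : ℝ → ℝ := fun v => 1 / 2 * Real.exp (-|v|) * (sgn (v + c) * v) with hF
    have h4 : ∀ v, d v • (sgn (v + c) * v) = F v := by
      intro v
      have hnn : (0 : ℝ) ≤ 1 / 2 * Real.exp (-|v|) := by positivity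
      rw [NNReal.smul_def, smul_eq_mul, hd]
      simp only [Real.coe_toNNReal _ hnn, hF]
    have hF1 : Set.EqOn F (fun v => -f0 v) (Set.Iio (-c)) := by
      intro v hv
      have hvc : v + c < 0 := by
        have : v < -c := hv
        linarith
      simp only [hF, sgn, if_pos hvc, f0]
      ring
    have hF2 : Set.EqOn F f0 (Set.Ici (-c)) := by
      intro v hv
      have hvc : ¬(v + c < 0) := by
        have : -c ≤ v := hv
        push_neg
        linarith
      simp only [hF, sgn, if_neg hvc, f0]
      ring
    have hAci : IntegrableOn f0 (Set.Ici (-c)) := by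
      rw [integrableOn_Ici_iff_integrableOn_Ioi]
      exact (intA (-c)).1
    have hint1 : IntegrableOn F (Set.Iio (-c)) :=
      IntegrableOn.congr_fun (((intB (-c)).1.mono_set Set.Iio_subset_Iic_self).neg)
        hF1.symm measurableSet_Iio
    have hint2 : IntegrableOn F (Set.Ici (-c)) :=
      IntegrableOn.congr_fun hAci hF2.symm measurableSet_Ici
    have hval1 : ∫ v in Set.Iio (-c), F v = 1 / 2 * (1 + |c|) * Real.exp (-|c|) := by
      rw [setIntegral_congr_fun measurableSet_Iio hF1, integral_neg,
        ← integral_Iic_eq_integral_Iio, (intB (-c)).2, abs_neg, neg_neg]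
    have hval2 : ∫ v in Set.Ici (-c), F v = 1 / 2 * (1 + |c|) * Real.exp (-|c|) := by
      rw [setIntegral_congr_fun measurableSet_Ici hF2, integral_Ici_eq_integral_Ioi,
        (intA (-c)).2, abs_neg]
    rw [h1, h3]
    simp only [h4]
    rw [← intervalIntegral.integral_Iio_add_Ici hint1 hint2, hval1, hval2]
    ring
  refine ⟨key, ?_, ?_⟩
  · rw [key]
    positivity
  · rw [key, Real.exp_neg, mul_inv_le_iff₀ (Real.exp_pos _), one_mul]
    linarith [Real.add_one_le_exp |c|]
end

section
/- Let A, Ā be symmetric n×n real matrices, where Ā has rank r and its smallest nonzero eigenvalue (in absolute value, equal to the spectral gap between the r-th and (r+1)-th eigenvalues) is at least α > 0. Let Û and U span the top-r eigenspaces of A and Ā respectively (as n×r matrices with orthonormal columns). Then there exists an r×r orthogonal matrix Q with ‖Û − U Q‖_F ≤ (2√(2r)/α) ‖A − Ā‖, where ‖·‖ is the operator norm. -/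
open Matrix Real

/-- Frobenius norm of a real matrix. -/
noncomputable def frobNorm {m k : ℕ} (M : Matrix (Fin m) (Fin k) ℝ) : ℝ :=
  Real.sqrt (∑ i, ∑ j, (M i j) ^ 2)

/-- ℓ₂ operator norm of a real square matrix. -/
noncomputable def opNorm {m : ℕ} (M : Matrix (Fin m) (Fin m) ℝ) : ℝ :=
  ‖Matrix.toEuclideanCLM (𝕜 := ℝ) M‖

lemma opNorm_nonneg {m : ℕ} (M : Matrix (Fin m) (Fin m) ℝ) : 0 ≤ opNorm M :=
  norm_nonneg _
lemma dot_sq_nonneg {m : ℕ} (x : Fin m → ℝ) : 0 ≤ x ⬝ᵥ x :=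
  Finset.sum_nonneg fun _ _ => mul_self_nonneg _
lemma dotT {a b : ℕ} (M : Matrix (Fin a) (Fin b) ℝ) (x : Fin a → ℝ) (y : Fin b → ℝ) :
    (Mᵀ *ᵥ x) ⬝ᵥ y = x ⬝ᵥ (M *ᵥ y) := by
  rw [Matrix.mulVec_transpose, ← Matrix.dotProduct_mulVec]
lemma dotT' {a b : ℕ} (M : Matrix (Fin a) (Fin b) ℝ) (x : Fin b → ℝ) (y : Fin a → ℝ) :
    (M *ᵥ x) ⬝ᵥ y = x ⬝ᵥ (Mᵀ *ᵥ y) := by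
  rw [← dotT Mᵀ x y, Matrix.transpose_transpose]
lemma norm_euc {m : ℕ} (x : Fin m → ℝ) :
    ‖(EuclideanSpace.equiv (Fin m) ℝ).symm x‖ = Real.sqrt (x ⬝ᵥ x) := by
  rw [EuclideanSpace.norm_eq]; congr 1
  simp [dotProduct, Real.norm_eq_abs, sq_abs, sq]
lemma dot_le_sqrt {m : ℕ} (x y : Fin m → ℝ) :
    x ⬝ᵥ y ≤ Real.sqrt (x ⬝ᵥ x) * Real.sqrt (y ⬝ᵥ y) := by
  have h := real_inner_le_norm ((EuclideanSpace.equiv (Fin m) ℝ).symm x)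
      ((EuclideanSpace.equiv (Fin m) ℝ).symm y)
  rw [norm_euc, norm_euc] at h
  convert h using 1
  simp [PiLp.inner_apply, dotProduct, mul_comm]
open scoped Matrix.Norms.L2Operator in
lemma opNorm_mulVec_dot {m : ℕ} (M : Matrix (Fin m) (Fin m) ℝ) (x : Fin m → ℝ) :
    (M *ᵥ x) ⬝ᵥ (M *ᵥ x) ≤ opNorm M ^ 2 * (x ⬝ᵥ x) := by
  have h := Matrix.l2_opNorm_mulVec M ((EuclideanSpace.equiv (Fin m) ℝ).symm x)
  rw [norm_euc] at h
  have h2 : ‖((EuclideanSpace.equiv (Fin m) ℝ).symm x : EuclideanSpace ℝ (Fin m))‖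
      = Real.sqrt (x ⬝ᵥ x) := norm_euc x
  rw [h2] at h
  have hM : ‖M‖ = opNorm M := rfl
  rw [hM] at h
  have h0 : (0:ℝ) ≤ Real.sqrt ((M *ᵥ x) ⬝ᵥ (M *ᵥ x)) := Real.sqrt_nonneg _
  have := pow_le_pow_left₀ h0 h 2
  rwa [Real.sq_sqrt (dot_sq_nonneg _), mul_pow, Real.sq_sqrt (dot_sq_nonneg _)] at this

lemma quad_le_opNorm {m : ℕ} (M : Matrix (Fin m) (Fin m) ℝ) (x : Fin m → ℝ) :
    x ⬝ᵥ (M *ᵥ x) ≤ opNorm M * (x ⬝ᵥ x) := by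
  have h1 := dot_le_sqrt x (M *ᵥ x)
  have h2 : Real.sqrt ((M *ᵥ x) ⬝ᵥ (M *ᵥ x)) ≤ opNorm M * Real.sqrt (x ⬝ᵥ x) := by
    have := Real.sqrt_le_sqrt (opNorm_mulVec_dot M x)
    rwa [Real.sqrt_mul (sq_nonneg _), Real.sqrt_sq (opNorm_nonneg M)] at this
  have h0 : (0:ℝ) ≤ Real.sqrt (x ⬝ᵥ x) := Real.sqrt_nonneg _
  calc x ⬝ᵥ (M *ᵥ x) ≤ Real.sqrt (x ⬝ᵥ x) * Real.sqrt ((M *ᵥ x) ⬝ᵥ (M *ᵥ x)) := h1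
  _ ≤ Real.sqrt (x ⬝ᵥ x) * (opNorm M * Real.sqrt (x ⬝ᵥ x)) :=
      mul_le_mul_of_nonneg_left h2 h0
  _ = opNorm M * (Real.sqrt (x ⬝ᵥ x) * Real.sqrt (x ⬝ᵥ x)) := by ring
  _ = opNorm M * (x ⬝ᵥ x) := by rw [Real.mul_self_sqrt (dot_sq_nonneg _)]

lemma weyl_step {n r : ℕ} (A Abar : Matrix (Fin n) (Fin n) ℝ)
    (Uhat U : Matrix (Fin n) (Fin r) ℝ) (What : Matrix (Fin n) (Fin (n - r)) ℝ)
    (hUhat : Uhatᵀ * Uhat = 1) (hWhat : Whatᵀ * What = 1) (hUW : Uhatᵀ * What = 0)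
    (D : Fin r → ℝ) (Ev : Fin (n - r) → ℝ) (Lam : Fin r → ℝ)
    (hA : A = Uhat * Matrix.diagonal D * Uhatᵀ + What * Matrix.diagonal Ev * Whatᵀ)
    (htop : ∀ i j, Ev j ≤ D i)
    (hAbar : Abar = U * Matrix.diagonal Lam * Uᵀ)
    (j : Fin (n - r)) : Ev j ≤ opNorm (A - Abar) := by
  classical
  set ε := opNorm (A - Abar) with hε
  set w : Fin n → ℝ := fun i => What i j with hwdef
  have hww : w ⬝ᵥ w = 1 := by
    have h := congrFun (congrFun hWhat j) j
    rw [Matrix.mul_apply] at h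
    rw [Matrix.one_apply_eq] at h
    rw [← h]
    simp [dotProduct, hwdef, Matrix.transpose_apply]
  have hUhw : Uhatᵀ *ᵥ w = 0 := by
    funext a
    have h := congrFun (congrFun hUW a) j
    rw [Matrix.mul_apply] at h
    simpa [Matrix.mulVec, dotProduct, hwdef, Matrix.transpose_apply] using h
  have hWhw : Whatᵀ *ᵥ w = fun j' => (1 : Matrix (Fin (n-r)) (Fin (n-r)) ℝ) j' j := by
    funext j'
    have h := congrFun (congrFun hWhat j') j
    rw [Matrix.mul_apply] at h
    simpa [Matrix.mulVec, dotProduct, hwdef, Matrix.transpose_apply] using h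
  -- find a nonzero kernel vector
  set N' : Matrix (Fin r) (Fin (r+1)) ℝ :=
    Matrix.of (fun a c => if h : (c : ℕ) < r then (Uᵀ * Uhat) a ⟨(c : ℕ), h⟩
      else (Uᵀ *ᵥ w) a) with hN'
  obtain ⟨c, hcker, hc0⟩ : ∃ c : Fin (r+1) → ℝ, N' *ᵥ c = 0 ∧ c ≠ 0 := by
    have h1 := LinearMap.finrank_range_add_finrank_ker (Matrix.mulVecLin N')
    have h2 : Module.finrank ℝ (LinearMap.range (Matrix.mulVecLin N')) ≤ r := by
      refine le_trans (Submodule.finrank_le _) ?_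
      simp [Module.finrank_fin_fun]
    have h3 : Module.finrank ℝ ((Fin (r+1) → ℝ)) = r + 1 := Module.finrank_fin_fun ℝ
    have hker : LinearMap.ker (Matrix.mulVecLin N') ≠ ⊥ := by
      intro hbot
      rw [hbot, h3] at h1
      rw [finrank_bot] at h1
      omega
    obtain ⟨c, hc, hc0⟩ := (Submodule.ne_bot_iff _).mp hker
    exact ⟨c, by simpa [Matrix.mulVecLin] using hc, hc0⟩
  set a : Fin r → ℝ := fun i => c i.castSucc with ha
  set t : ℝ := c (Fin.last r) with ht
  have hmv : (Uᵀ * Uhat) *ᵥ a + t • (Uᵀ *ᵥ w) = 0 := by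
    funext a'
    have h := congrFun hcker a'
    rw [Matrix.mulVec, dotProduct, Fin.sum_univ_castSucc] at h
    have h4 : ∀ i : Fin r, N' a' i.castSucc = (Uᵀ * Uhat) a' i := by
      intro i
      have hlt : ((i.castSucc : Fin (r+1)) : ℕ) < r := by
        simp [Fin.coe_castSucc, i.isLt]
      rw [hN']
      simp only [Matrix.of_apply]
      rw [dif_pos hlt]
      congr 1
    have h5 : N' a' (Fin.last r) = (Uᵀ *ᵥ w) a' := by
      rw [hN']
      simp only [Matrix.of_apply]
      rw [dif_neg (by simp [Fin.val_last])]
    rw [h5] at h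
    simp only [h4] at h
    simpa [Matrix.mulVec, dotProduct, ha, ht, mul_comm] using h
  set v : Fin n → ℝ := Uhat *ᵥ a + t • w with hv
  have hUv : Uᵀ *ᵥ v = 0 := by
    rw [hv, Matrix.mulVec_add, Matrix.mulVec_smul, Matrix.mulVec_mulVec]
    exact hmv
  have hAbarv : Abar *ᵥ v = 0 := by
    rw [hAbar, ← Matrix.mulVec_mulVec, hUv, Matrix.mulVec_zero]
  have hUhatv : Uhatᵀ *ᵥ v = a := by
    rw [hv, Matrix.mulVec_add, Matrix.mulVec_smul, Matrix.mulVec_mulVec, hUhat,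
      Matrix.one_mulVec, hUhw, smul_zero, add_zero]
  have hWhatv : Whatᵀ *ᵥ v = t • (fun j' => (1 : Matrix (Fin (n-r)) (Fin (n-r)) ℝ) j' j) := by
    have hWU : Whatᵀ * Uhat = 0 := by
      have := congrArg Matrix.transpose hUW
      simpa [Matrix.transpose_mul] using this
    rw [hv, Matrix.mulVec_add, Matrix.mulVec_smul, Matrix.mulVec_mulVec, hWU,
      Matrix.zero_mulVec, zero_add, hWhw]
  have hvv : v ⬝ᵥ v = a ⬝ᵥ a + t^2 := by
    rw [hv]
    rw [dotProduct_add, add_dotProduct, add_dotProduct]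
    rw [dotT' Uhat a (Uhat *ᵥ a), Matrix.mulVec_mulVec, hUhat, Matrix.one_mulVec]
    rw [dotProduct_smul, dotT' Uhat a w]
    rw [hUhw, dotProduct_zero, smul_zero]
    rw [smul_dotProduct, ← dotT Uhat w a, hUhw]
    simp [zero_dotProduct, smul_dotProduct, dotProduct_smul, hww,
      smul_eq_mul]
    ring
  -- quadratic form of A at v
  have hAv : v ⬝ᵥ (A *ᵥ v) = (∑ i, D i * (a i)^2) + Ev j * t^2 := by
    rw [hA, Matrix.add_mulVec, dotProduct_add]
    have e1 : (Uhat * Matrix.diagonal D * Uhatᵀ) *ᵥ v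
        = Uhat *ᵥ (Matrix.diagonal D *ᵥ (Uhatᵀ *ᵥ v)) := by
      rw [Matrix.mulVec_mulVec, Matrix.mulVec_mulVec]
    have e2 : (What * Matrix.diagonal Ev * Whatᵀ) *ᵥ v
        = What *ᵥ (Matrix.diagonal Ev *ᵥ (Whatᵀ *ᵥ v)) := by
      rw [Matrix.mulVec_mulVec, Matrix.mulVec_mulVec]
    rw [e1, e2, ← dotT Uhat v, ← dotT What v, hUhatv, hWhatv]
    have hfirst : a ⬝ᵥ (Matrix.diagonal D *ᵥ a) = ∑ i, D i * (a i)^2 := by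
      rw [dotProduct]
      refine Finset.sum_congr rfl fun i _ => ?_
      rw [Matrix.mulVec_diagonal]
      ring
    have hsecond : (t • fun j' => (1 : Matrix (Fin (n-r)) (Fin (n-r)) ℝ) j' j) ⬝ᵥ
        (Matrix.diagonal Ev *ᵥ (t • fun j' => (1 : Matrix (Fin (n-r)) (Fin (n-r)) ℝ) j' j))
        = Ev j * t^2 := by
      simp only [dotProduct, Matrix.mulVec_diagonal, Pi.smul_apply, smul_eq_mul,
        Matrix.one_apply, mul_ite, ite_mul, mul_zero, zero_mul, mul_one]
      rw [Finset.sum_ite_eq' Finset.univ j]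
      simp only [Finset.mem_univ, if_pos]
      ring
    rw [hfirst, hsecond]
  have hEA : v ⬝ᵥ (A *ᵥ v) ≤ ε * (v ⬝ᵥ v) := by
    have h1 : v ⬝ᵥ (A *ᵥ v) = v ⬝ᵥ ((A - Abar) *ᵥ v) := by
      rw [Matrix.sub_mulVec, dotProduct_sub, hAbarv, dotProduct_zero, sub_zero]
    rw [h1, hε]
    exact quad_le_opNorm _ v
  have hlow : Ev j * (v ⬝ᵥ v) ≤ v ⬝ᵥ (A *ᵥ v) := by
    rw [hAv, hvv]
    have hkey : Ev j * (a ⬝ᵥ a) ≤ ∑ i, D i * (a i)^2 := by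
      rw [dotProduct, Finset.mul_sum]
      apply Finset.sum_le_sum
      intro i _
      have h2 := mul_le_mul_of_nonneg_right (htop i j) (sq_nonneg (a i))
      calc Ev j * (a i * a i) = Ev j * (a i)^2 := by ring
      _ ≤ D i * (a i)^2 := h2
    have expand : Ev j * (a ⬝ᵥ a + t^2) = Ev j * (a ⬝ᵥ a) + Ev j * t^2 := by ring
    rw [expand]
    linarith
  have hpos : 0 < v ⬝ᵥ v := by
    rw [hvv]
    have hsum : a ⬝ᵥ a + t^2 = ∑ i : Fin (r+1), (c i)^2 := by
      rw [Fin.sum_univ_castSucc, dotProduct]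
      simp [ha, ht, sq]
    rw [hsum]
    obtain ⟨i0, hi0⟩ := Function.ne_iff.mp hc0
    refine Finset.sum_pos' (fun i _ => sq_nonneg _) ⟨i0, Finset.mem_univ i0, ?_⟩
    have : c i0 ≠ 0 := hi0
    exact lt_of_le_of_ne (sq_nonneg _) (Ne.symm (pow_ne_zero 2 this))
  have hfin := le_trans hlow hEA
  exact le_of_mul_le_mul_right hfin hpos

lemma complete {n r : ℕ} (hrn : r ≤ n)
    (Uhat : Matrix (Fin n) (Fin r) ℝ) (What : Matrix (Fin n) (Fin (n - r)) ℝ)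
    (hUhat : Uhatᵀ * Uhat = 1) (hWhat : Whatᵀ * What = 1) (hUW : Uhatᵀ * What = 0) :
    Uhat * Uhatᵀ + What * Whatᵀ = 1 := by
  have hWU : Whatᵀ * Uhat = 0 := by
    have := congrArg Matrix.transpose hUW
    simpa [Matrix.transpose_mul] using this
  set M : Matrix (Fin n) (Fin r ⊕ Fin (n - r)) ℝ := Matrix.fromCols Uhat What with hM
  have hMtM : Mᵀ * M = 1 := by
    rw [hM, Matrix.transpose_fromCols, Matrix.fromRows_mul_fromCols,
      hUhat, hWhat, hUW, hWU, ← Matrix.fromBlocks_one]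
  have e : (Fin r ⊕ Fin (n - r)) ≃ Fin n := finSumFinEquiv.trans (finCongr (by omega))
  have hBtB : (Mᵀ.submatrix e.symm id) * (M.submatrix id e.symm) = 1 := by
    rw [show (id : Fin n → Fin n) = (Equiv.refl (Fin n) : Fin n → Fin n) from rfl,
      Matrix.submatrix_mul_equiv, hMtM, Matrix.submatrix_one_equiv]
  have hBBt : (M.submatrix id e.symm) * (Mᵀ.submatrix e.symm id) = 1 := by
    rw [mul_eq_one_comm] at hBtB
    convert hBtB using 2
  have hMMt : M * Mᵀ = 1 := by
    have := Matrix.submatrix_mul_equiv M Mᵀ id e.symm id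
    rw [hBBt] at this
    simpa using this.symm
  rw [hM, Matrix.transpose_fromCols, Matrix.fromCols_mul_fromRows] at hMMt
  exact hMMt

lemma inner_euc {m : ℕ} (x y : Fin m → ℝ) :
    (inner ℝ ((EuclideanSpace.equiv (Fin m) ℝ).symm x)
      ((EuclideanSpace.equiv (Fin m) ℝ).symm y) : ℝ) = x ⬝ᵥ y := by
  rw [PiLp.inner_apply]
  simp [dotProduct, mul_comm]

lemma polar_exists {r : ℕ} (K : Matrix (Fin r) (Fin r) ℝ)
    (hle : ∀ v : Fin r → ℝ, v ⬝ᵥ ((K * Kᵀ) *ᵥ v) ≤ v ⬝ᵥ v) :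
    ∃ Q : Matrix (Fin r) (Fin r) ℝ, Qᵀ * Q = 1 ∧ (K * Kᵀ).trace ≤ (Qᵀ * K).trace := by
  classical
  set S : Matrix (Fin r) (Fin r) ℝ := K * Kᵀ with hSdef
  have hSsymm : Sᵀ = S := by rw [hSdef, Matrix.transpose_mul, Matrix.transpose_transpose]
  have hS : S.IsHermitian := by
    rw [Matrix.IsHermitian, Matrix.conjTranspose_eq_transpose_of_trivial, hSsymm]
  set b := hS.eigenvectorBasis with hb
  set μ := hS.eigenvalues with hμ
  have hmul : ∀ j, S *ᵥ ⇑(b j) = μ j • ⇑(b j) := fun j => hS.mulVec_eigenvectorBasis j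
  have hinner : ∀ j k, (⇑(b j) : Fin r → ℝ) ⬝ᵥ ⇑(b k) = if j = k then 1 else 0 := by
    intro j k
    have := (orthonormal_iff_ite (𝕜 := ℝ)).mp b.orthonormal j k
    rw [← this, PiLp.inner_apply]
    simp [dotProduct, mul_comm]
  have hquad : ∀ j, (⇑(b j) : Fin r → ℝ) ⬝ᵥ (S *ᵥ ⇑(b j)) = μ j := by
    intro j
    rw [hmul j, dotProduct_smul]
    simp [hinner j j]
  have hμ0 : ∀ j, 0 ≤ μ j := by
    intro j
    have h1 : (⇑(b j) : Fin r → ℝ) ⬝ᵥ (S *ᵥ ⇑(b j)) = (Kᵀ *ᵥ ⇑(b j)) ⬝ᵥ (Kᵀ *ᵥ ⇑(b j)) := by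
      rw [hSdef, ← Matrix.mulVec_mulVec, ← dotT K]
    rw [← hquad j, h1]
    exact dot_sq_nonneg _
  have hμ1 : ∀ j, μ j ≤ 1 := by
    intro j
    have := hle ⇑(b j)
    rw [hquad j] at this
    simpa [hinner j j] using this
  -- the (scaled) image vectors
  set w : Fin r → (Fin r → ℝ) := fun j => Kᵀ *ᵥ ⇑(b j) with hw
  have hwdot : ∀ j k, w j ⬝ᵥ w k = μ k * ((⇑(b j) : Fin r → ℝ) ⬝ᵥ ⇑(b k)) := by
    intro j k
    rw [hw]
    dsimp only
    rw [dotT K, Matrix.mulVec_mulVec, ← hSdef, hmul k, dotProduct_smul]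
    rfl
  set v : Fin r → EuclideanSpace ℝ (Fin r) :=
    fun j => (Real.sqrt (μ j))⁻¹ • ((EuclideanSpace.equiv (Fin r) ℝ).symm (w j)) with hv
  set s : Set (Fin r) := {j | μ j ≠ 0} with hs
  have hsqrt_pos : ∀ j ∈ s, 0 < Real.sqrt (μ j) := by
    intro j hj
    exact Real.sqrt_pos.mpr (lt_of_le_of_ne (hμ0 j) (Ne.symm hj))
  have horth : Orthonormal ℝ (s.restrict v) := by
    rw [orthonormal_iff_ite]
    rintro ⟨j, hj⟩ ⟨k, hk⟩
    change inner ℝ (v j) (v k) = _; rw [hv]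
    dsimp only
    rw [real_inner_smul_left, real_inner_smul_right, inner_euc, hwdot j k, hinner j k]
    by_cases hjk : j = k
    · subst hjk
      have h2 : Real.sqrt (μ j) * Real.sqrt (μ j) = μ j :=
        Real.mul_self_sqrt (hμ0 j)
      have h3 : Real.sqrt (μ j) ≠ 0 := ne_of_gt (hsqrt_pos j hj)
      have h4 : (Real.sqrt (μ j))⁻¹ * ((Real.sqrt (μ j))⁻¹ * (μ j * (1:ℝ))) = 1 := by
        rw [mul_one, ← h2]
        field_simp
        rw [Real.sqrt_sq (Real.sqrt_nonneg _)]
      simpa using h4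
    · have : (⟨j, hj⟩ : s) ≠ ⟨k, hk⟩ := by simp [hjk]
      rw [if_neg hjk, if_neg this]
      ring
  obtain ⟨c, hc⟩ := horth.exists_orthonormalBasis_extension_of_card_eq
    (by simp [finrank_euclideanSpace])
  have hinnerC : ∀ j k, (⇑(c j) : Fin r → ℝ) ⬝ᵥ ⇑(c k) = if j = k then 1 else 0 := by
    intro j k
    have := (orthonormal_iff_ite (𝕜 := ℝ)).mp c.orthonormal j k
    rw [← this, PiLp.inner_apply]
    simp [dotProduct, mul_comm]
  -- matrices with rows the basis vectors
  set P : Matrix (Fin r) (Fin r) ℝ := Matrix.of (fun j i => b j i) with hP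
  set C : Matrix (Fin r) (Fin r) ℝ := Matrix.of (fun j i => c j i) with hC
  have hPPt : P * Pᵀ = 1 := by
    ext j k
    rw [Matrix.mul_apply]
    simpa [hP, dotProduct, Matrix.one_apply] using hinner j k
  have hCCt : C * Cᵀ = 1 := by
    ext j k
    rw [Matrix.mul_apply]
    simpa [hC, dotProduct, Matrix.one_apply] using hinnerC j k
  have hPtP : Pᵀ * P = 1 := mul_eq_one_comm.mp hPPt
  have hCtC : Cᵀ * C = 1 := mul_eq_one_comm.mp hCCt
  -- key identity  P * K = diag (√μ) * C
  have hPK : P * K = Matrix.diagonal (fun j => Real.sqrt (μ j)) * C := by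
    ext j i
    rw [Matrix.diagonal_mul]
    have hPKji : (P * K) j i = w j i := by
      rw [Matrix.mul_apply, hw]
      simp [hP, Matrix.mulVec, dotProduct, Matrix.transpose_apply, mul_comm]
    rw [hPKji]
    by_cases hj : μ j = 0
    · have hwj : w j ⬝ᵥ w j = 0 := by rw [hwdot j j, hj, zero_mul]
      have : w j i = 0 := by
        have h0 : ∀ i ∈ Finset.univ, (0:ℝ) ≤ w j i * w j i := fun _ _ => mul_self_nonneg _
        have := (Finset.sum_eq_zero_iff_of_nonneg h0).mp hwj i (Finset.mem_univ i)
        exact mul_self_eq_zero.mp this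
      rw [this, hj, Real.sqrt_zero, zero_mul]
    · have hcj : c j = v j := hc j hj
      have : C j i = (Real.sqrt (μ j))⁻¹ * w j i := by
        rw [hC]
        show (c j) i = _
        rw [hcj, hv]
        rfl
      rw [this, ← mul_assoc, mul_inv_cancel₀ (ne_of_gt (hsqrt_pos j hj)), one_mul]
  refine ⟨Pᵀ * C, ?_, ?_⟩
  · rw [Matrix.transpose_mul, Matrix.transpose_transpose, Matrix.mul_assoc,
      ← Matrix.mul_assoc P Pᵀ C, hPPt, Matrix.one_mul, hCtC]
  · -- traces
    have htrQK : ((Pᵀ * C)ᵀ * K).trace = ∑ j, Real.sqrt (μ j) := by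
      rw [Matrix.transpose_mul, Matrix.transpose_transpose, Matrix.mul_assoc, hPK,
        ← Matrix.mul_assoc, Matrix.trace_mul_comm, ← Matrix.mul_assoc, hCCt,
        Matrix.one_mul, Matrix.trace_diagonal]
    have hPS : P * S = Matrix.diagonal μ * P := by
      ext j i
      rw [Matrix.diagonal_mul]
      have hsym' : ∀ p q, S p q = S q p := fun p q => by
        have h := congrFun (congrFun hSsymm p) q
        rw [Matrix.transpose_apply] at h
        exact h.symm
      have h1 : (P * S) j i = (S *ᵥ ⇑(b j)) i := by
        rw [Matrix.mul_apply, Matrix.mulVec, dotProduct]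
        refine Finset.sum_congr rfl fun x _ => ?_
        show P j x * S x i = S i x * b j x
        rw [hP, hsym' i x, mul_comm]
        rfl
      rw [h1, hmul j]
      rfl
    have htrS : S.trace = ∑ j, μ j := by
      have : S = Pᵀ * (Matrix.diagonal μ * P) := by
        rw [← hPS, ← Matrix.mul_assoc, hPtP, Matrix.one_mul]
      rw [this, Matrix.trace_mul_comm, Matrix.mul_assoc, hPPt, Matrix.mul_one,
        Matrix.trace_diagonal]
    rw [htrQK, htrS]
    apply Finset.sum_le_sum
    intro j _
    calc μ j = Real.sqrt (μ j ^ 2) := (Real.sqrt_sq (hμ0 j)).symm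
    _ ≤ Real.sqrt (μ j) := by
        apply Real.sqrt_le_sqrt
        nlinarith [hμ0 j, hμ1 j]


noncomputable def frobSq {m k : ℕ} (M : Matrix (Fin m) (Fin k) ℝ) : ℝ :=
  ∑ i, ∑ j, (M i j) ^ 2

lemma frobSq_nonneg {m k : ℕ} (M : Matrix (Fin m) (Fin k) ℝ) : 0 ≤ frobSq M :=
  Finset.sum_nonneg fun _ _ => Finset.sum_nonneg fun _ _ => sq_nonneg _

lemma frobSq_eq_trace {m k : ℕ} (M : Matrix (Fin m) (Fin k) ℝ) :
    frobSq M = (Mᵀ * M).trace := by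
  rw [frobSq, Matrix.trace, Finset.sum_comm]
  refine Finset.sum_congr rfl fun j _ => ?_
  rw [Matrix.diag_apply, Matrix.mul_apply]
  exact Finset.sum_congr rfl fun i _ => by rw [Matrix.transpose_apply]; ring

lemma trace_expand {n r : ℕ} (Uhat U : Matrix (Fin n) (Fin r) ℝ)
    (Q K : Matrix (Fin r) (Fin r) ℝ)
    (hUhat : Uhatᵀ * Uhat = 1) (hU : Uᵀ * U = 1) (hQ : Qᵀ * Q = 1)
    (hKdef : K = Uᵀ * Uhat) :
    ((Uhat - U * Q)ᵀ * (Uhat - U * Q)).trace = 2 * (r : ℝ) - 2 * (Qᵀ * K).trace := by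
  have e2 : (U * Q)ᵀ * (U * Q) = 1 := by
    rw [Matrix.transpose_mul, Matrix.mul_assoc, ← Matrix.mul_assoc Uᵀ U Q, hU,
      Matrix.one_mul, hQ]
  have e3 : Uhatᵀ * (U * Q) = Kᵀ * Q := by
    rw [← Matrix.mul_assoc, hKdef, Matrix.transpose_mul, Matrix.transpose_transpose]
  have e4 : (U * Q)ᵀ * Uhat = Qᵀ * K := by
    rw [Matrix.transpose_mul, Matrix.mul_assoc, hKdef]
  have etr : (Kᵀ * Q).trace = (Qᵀ * K).trace := by
    rw [← Matrix.trace_transpose (Qᵀ * K), Matrix.transpose_mul, Matrix.transpose_transpose]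
  rw [Matrix.transpose_sub, Matrix.sub_mul, Matrix.mul_sub, Matrix.mul_sub,
    Matrix.trace_sub, Matrix.trace_sub, Matrix.trace_sub, hUhat, e2, e3, e4,
    Matrix.trace_one, etr]
  simp [Fintype.card_fin]
  ring

set_option maxHeartbeats 2000000 in
/-- Davis–Kahan sin-Θ (Lei–Rinaldo variant): if `Ā = U Λ Uᵀ` has rank `r` with all nonzero
eigenvalues at least `α > 0`, `A = Û D Ûᵀ + Ŵ E Ŵᵀ` is a full eigendecomposition of `A`
with `D` its `r` largest eigenvalues, then there is an orthogonal `Q` with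
`‖Û − U Q‖_F ≤ (2√(2r)/α) ‖A − Ā‖`. -/
theorem stmt13 (n r : ℕ)
    (A Abar : Matrix (Fin n) (Fin n) ℝ)
    (Uhat U : Matrix (Fin n) (Fin r) ℝ) (What : Matrix (Fin n) (Fin (n - r)) ℝ)
    (hUhat : Uhatᵀ * Uhat = 1) (hWhat : Whatᵀ * What = 1) (hUW : Uhatᵀ * What = 0)
    (hU : Uᵀ * U = 1)
    (D : Fin r → ℝ) (Ev : Fin (n - r) → ℝ) (Lam : Fin r → ℝ)
    (hA : A = Uhat * Matrix.diagonal D * Uhatᵀ + What * Matrix.diagonal Ev * Whatᵀ)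
    (htop : ∀ i j, Ev j ≤ D i)
    (hAbar : Abar = U * Matrix.diagonal Lam * Uᵀ)
    (α : ℝ) (hα : 0 < α) (hLam : ∀ i, α ≤ Lam i) :
    ∃ Q : Matrix (Fin r) (Fin r) ℝ, Qᵀ * Q = 1 ∧
      frobNorm (Uhat - U * Q) ≤ 2 * Real.sqrt (2 * r) / α * opNorm (A - Abar) := by

  classical
  set ε := opNorm (A - Abar) with hεdef
  have hε0 : 0 ≤ ε := opNorm_nonneg _
  -- r ≤ n
  have hrn : r ≤ n := by
    have h1 : ((1 : Matrix (Fin r) (Fin r) ℝ)).rank = r := by simp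
    have h2 : (Uᵀ * U).rank ≤ Uᵀ.rank := Matrix.rank_mul_le_left _ _
    have h3 : Uᵀ.rank ≤ n := by simpa using Matrix.rank_le_width Uᵀ
    rw [hU, h1] at h2
    omega
  have hWU : Whatᵀ * Uhat = 0 := by
    have := congrArg Matrix.transpose hUW
    simpa [Matrix.transpose_mul] using this
  have hC : Uhat * Uhatᵀ + What * Whatᵀ = 1 :=
    complete hrn Uhat What hUhat hWhat hUW
  have hEv : ∀ j, Ev j ≤ ε :=
    fun j => weyl_step A Abar Uhat U What hUhat hWhat hUW D Ev Lam hA htop hAbar j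
  -- key matrices
  set N : Matrix (Fin (n - r)) (Fin r) ℝ := Whatᵀ * U with hNdef
  set F : Matrix (Fin (n - r)) (Fin r) ℝ := Whatᵀ * (A - Abar) * U with hFdef
  set K : Matrix (Fin r) (Fin r) ℝ := Uᵀ * Uhat with hKdef
  -- the sin-theta identity
  have hWA : Whatᵀ * A = Matrix.diagonal Ev * Whatᵀ := by
    rw [hA, Matrix.mul_add]
    simp only [← Matrix.mul_assoc]
    rw [hWU, hWhat, Matrix.zero_mul, Matrix.zero_mul, Matrix.one_mul, zero_add]
  have hWAbarU : Whatᵀ * Abar * U = N * Matrix.diagonal Lam := by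
    rw [hAbar]
    simp only [← Matrix.mul_assoc]
    rw [Matrix.mul_assoc (Whatᵀ * U * Matrix.diagonal Lam) Uᵀ U, hU, Matrix.mul_one, hNdef]
  have hF : F = Matrix.diagonal Ev * N - N * Matrix.diagonal Lam := by
    rw [hFdef, Matrix.mul_sub, Matrix.sub_mul, hWAbarU, hWA, hNdef, Matrix.mul_assoc]
  have hentry : ∀ j' i, (Ev j' - Lam i) * N j' i = F j' i := by
    intro j' i
    have h := congrFun (congrFun hF j') i
    rw [Matrix.sub_apply, Matrix.diagonal_mul, Matrix.mul_diagonal] at h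
    rw [h]
    ring
  -- K Kᵀ = 1 - Nᵀ N
  have hKN : K * Kᵀ = 1 - Nᵀ * N := by
    have hKt : Kᵀ = Uhatᵀ * U := by
      rw [hKdef, Matrix.transpose_mul, Matrix.transpose_transpose]
    have hNt : Nᵀ = Uᵀ * What := by
      rw [hNdef, Matrix.transpose_mul, Matrix.transpose_transpose]
    have hsum : K * Kᵀ + Nᵀ * N = Uᵀ * (Uhat * Uhatᵀ + What * Whatᵀ) * U := by
      rw [hKt, hNt, hKdef, hNdef, Matrix.mul_add, Matrix.add_mul]
      simp only [← Matrix.mul_assoc]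
    rw [hC, Matrix.mul_one, hU] at hsum
    exact eq_sub_of_add_eq hsum
  have hKN' : K * Kᵀ + Nᵀ * N = 1 := by rw [hKN]; abel
  -- polar decomposition
  have hle : ∀ v : Fin r → ℝ, v ⬝ᵥ ((K * Kᵀ) *ᵥ v) ≤ v ⬝ᵥ v := by
    intro v
    rw [hKN, Matrix.sub_mulVec, dotProduct_sub, Matrix.one_mulVec,
      ← Matrix.mulVec_mulVec, ← dotT' N v (N *ᵥ v)]
    exact sub_le_self _ (dot_sq_nonneg _)
  obtain ⟨Q, hQ, htr⟩ := polar_exists K hle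
  refine ⟨Q, hQ, ?_⟩
  -- Frobenius computation
  have htr2 : frobSq (Uhat - U * Q) = 2 * (r : ℝ) - 2 * (Qᵀ * K).trace := by
    rw [frobSq_eq_trace]
    exact trace_expand Uhat U Q K hUhat hU hQ hKdef
  have htrKK : (K * Kᵀ).trace = frobSq Kᵀ := by
    rw [frobSq_eq_trace, Matrix.transpose_transpose]
  have htrNN : (Nᵀ * N).trace = frobSq N := (frobSq_eq_trace N).symm
  have htrsum : (K * Kᵀ).trace + frobSq N = (r : ℝ) := by
    have := congrArg Matrix.trace hKN'
    rw [Matrix.trace_add, Matrix.trace_one, htrNN] at this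
    simpa [Fintype.card_fin] using this
  have hfrobN : frobSq (Uhat - U * Q) ≤ 2 * frobSq N := by
    rw [htr2]
    have : (K * Kᵀ).trace ≤ (Qᵀ * K).trace := htr
    linarith
  have hNr : frobSq N ≤ (r : ℝ) := by
    have h0 : 0 ≤ (K * Kᵀ).trace := by rw [htrKK]; exact frobSq_nonneg _
    linarith
  have hfrobNormle : ∀ c : ℝ, 0 ≤ c → frobSq (Uhat - U * Q) ≤ c ^ 2 →
      frobNorm (Uhat - U * Q) ≤ c := by
    intro c hc hle'
    have h1 : frobNorm (Uhat - U * Q) = Real.sqrt (frobSq (Uhat - U * Q)) := rfl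
    rw [h1]
    calc Real.sqrt (frobSq (Uhat - U * Q)) ≤ Real.sqrt (c ^ 2) := Real.sqrt_le_sqrt hle'
    _ = c := Real.sqrt_sq hc
  by_cases hcase : α ≤ 2 * ε
  · -- easy case
    apply hfrobNormle
    · positivity
    · have hsq : (2 * Real.sqrt (2 * r) / α * ε) ^ 2 = 4 * (2 * (r:ℝ)) / α ^ 2 * ε ^ 2 := by
        have h2r : Real.sqrt (2 * ↑r) ^ 2 = 2 * (r:ℝ) := Real.sq_sqrt (by positivity)
        calc (2 * Real.sqrt (2 * ↑r) / α * ε) ^ 2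
            = Real.sqrt (2 * ↑r) ^ 2 * (4 / α ^ 2 * ε ^ 2) := by ring
        _ = _ := by rw [h2r]; ring
      rw [hsq]
      have h1 : frobSq (Uhat - U * Q) ≤ 2 * (r : ℝ) := le_trans hfrobN (by linarith)
      have h2 : α ^ 2 ≤ 4 * ε ^ 2 := by nlinarith
      have h3 : 2 * (r:ℝ) ≤ 4 * (2 * (r:ℝ)) / α ^ 2 * ε ^ 2 := by
        have hα2 : (0:ℝ) < α ^ 2 := by positivity
        rw [div_mul_eq_mul_div, le_div_iff₀ hα2]
        have hr0 : (0:ℝ) ≤ (r:ℝ) := Nat.cast_nonneg r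
        nlinarith [mul_le_mul_of_nonneg_left h2 (by positivity : (0:ℝ) ≤ 2 * (r:ℝ))]
      linarith
  · -- main case : 2ε < α
    push_neg at hcase
    have hgap : ∀ i j', α / 2 ≤ Lam i - Ev j' := by
      intro i j'
      have := hEv j'
      have := hLam i
      linarith
    have hq : ∀ j' i, α ^ 2 * (N j' i) ^ 2 ≤ 4 * (F j' i) ^ 2 := by
      intro j' i
      rw [← hentry j' i]
      have hg : α ≤ 2 * (Lam i - Ev j') := by
        have := hgap i j'
        linarith
      nlinarith [sq_nonneg (N j' i), mul_nonneg (sub_nonneg.mpr hg)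
        (by linarith [hgap i j'] : (0:ℝ) ≤ 2 * (Lam i - Ev j') + α)]
    have hNF2 : α ^ 2 * frobSq N ≤ 4 * frobSq F := by
      rw [frobSq, frobSq, Finset.mul_sum, Finset.mul_sum]
      refine Finset.sum_le_sum fun j' _ => ?_
      rw [Finset.mul_sum, Finset.mul_sum]
      exact Finset.sum_le_sum fun i _ => hq j' i
    -- column bound on F
    have hcontr : ∀ x : Fin n → ℝ, (Whatᵀ *ᵥ x) ⬝ᵥ (Whatᵀ *ᵥ x) ≤ x ⬝ᵥ x := by
      intro x
      have hWWt : What * Whatᵀ = 1 - Uhat * Uhatᵀ := by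
        rw [← hC]; abel
      rw [dotT What x (Whatᵀ *ᵥ x), Matrix.mulVec_mulVec, hWWt, Matrix.sub_mulVec,
        dotProduct_sub, Matrix.one_mulVec, ← Matrix.mulVec_mulVec,
        ← dotT Uhat x (Uhatᵀ *ᵥ x)]
      exact sub_le_self _ (dot_sq_nonneg _)
    have hFr : frobSq F ≤ (r : ℝ) * ε ^ 2 := by
      rw [frobSq, Finset.sum_comm]
      have hcol : ∀ i, (∑ j', (F j' i) ^ 2) ≤ ε ^ 2 := by
        intro i
        set u : Fin n → ℝ := fun k => U k i with hu
        have huu : u ⬝ᵥ u = 1 := by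
          have h := congrFun (congrFun hU i) i
          rw [Matrix.mul_apply, Matrix.one_apply_eq] at h
          rw [← h]
          simp [dotProduct, hu, Matrix.transpose_apply]
        have hFcol : ∀ j', F j' i = (Whatᵀ *ᵥ ((A - Abar) *ᵥ u)) j' := by
          intro j'
          rw [Matrix.mulVec_mulVec, hFdef]
          simp [Matrix.mul_apply, Matrix.mulVec, dotProduct, hu]
        have hsum : (∑ j', (F j' i) ^ 2)
            = (Whatᵀ *ᵥ ((A - Abar) *ᵥ u)) ⬝ᵥ (Whatᵀ *ᵥ ((A - Abar) *ᵥ u)) := by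
          rw [dotProduct]
          exact Finset.sum_congr rfl fun j' _ => by rw [hFcol j']; ring
        rw [hsum]
        calc (Whatᵀ *ᵥ ((A - Abar) *ᵥ u)) ⬝ᵥ (Whatᵀ *ᵥ ((A - Abar) *ᵥ u))
            ≤ ((A - Abar) *ᵥ u) ⬝ᵥ ((A - Abar) *ᵥ u) := hcontr _
        _ ≤ ε ^ 2 * (u ⬝ᵥ u) := opNorm_mulVec_dot _ _
        _ = ε ^ 2 := by rw [huu, mul_one]
      calc (∑ i, ∑ j', (F j' i) ^ 2) ≤ ∑ i : Fin r, ε ^ 2 :=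
          Finset.sum_le_sum fun i _ => hcol i
      _ = (r : ℝ) * ε ^ 2 := by
          rw [Finset.sum_const, Finset.card_univ, Fintype.card_fin, nsmul_eq_mul]
    apply hfrobNormle
    · positivity
    · have hsq : (2 * Real.sqrt (2 * r) / α * ε) ^ 2 = 8 * (r:ℝ) * ε ^ 2 / α ^ 2 := by
        have h2r : Real.sqrt (2 * ↑r) ^ 2 = 2 * (r:ℝ) := Real.sq_sqrt (by positivity)
        calc (2 * Real.sqrt (2 * ↑r) / α * ε) ^ 2
            = Real.sqrt (2 * ↑r) ^ 2 * (4 / α ^ 2 * ε ^ 2) := by ring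
        _ = _ := by rw [h2r]; ring
      rw [hsq]
      have hα2 : (0:ℝ) < α ^ 2 := by positivity
      have hNle : frobSq N ≤ 4 * (r:ℝ) * ε ^ 2 / α ^ 2 := by
        rw [le_div_iff₀ hα2]
        calc frobSq N * α ^ 2 = α ^ 2 * frobSq N := by ring
        _ ≤ 4 * frobSq F := hNF2
        _ ≤ 4 * ((r:ℝ) * ε ^ 2) := by linarith
        _ = 4 * (r:ℝ) * ε ^ 2 := by ring
      calc frobSq (Uhat - U * Q) ≤ 2 * frobSq N := hfrobN
      _ ≤ 2 * (4 * (r:ℝ) * ε ^ 2 / α ^ 2) := by linarith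
      _ = 8 * (r:ℝ) * ε ^ 2 / α ^ 2 := by ring
end

section
/- Let J_{m} = η J_{m-1} + K Λ Kᵀ where J_{m-1} = U Π Uᵀ with U ∈ ℝ^{n×r} having orthonormal columns, K ∈ ℝ^{n×2}, Λ ∈ ℝ^{2×2} diagonal. Let R = (I − U Uᵀ)K and P an n×p matrix with orthonormal columns whose column span contains the column span of R and is orthogonal to the column span of U. Then J_m = [U P] Γ [U P]ᵀ, where Γ = [[η Π, 0],[0, 0]] + [UᵀK; PᵀR] Λ [UᵀK; PᵀR]ᵀ is an (r+p)×(r+p) symmetric matrix. -/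
open Matrix

/-- Rank-two EVD update identity: with `J_{m-1} = U Π Uᵀ`, `R = (I − U Uᵀ) K`, `P` an
orthonormal basis orthogonal to `col U` with `col R ⊆ col P`, one has
`η J_{m-1} + K Λ Kᵀ = [U P] Γ [U P]ᵀ` where
`Γ = [[η Π, 0],[0,0]] + [UᵀK; PᵀR] Λ [UᵀK; PᵀR]ᵀ`. -/
theorem stmt15 (n r p : ℕ) (η : ℝ)
    (U : Matrix (Fin n) (Fin r) ℝ) (Pi : Fin r → ℝ)
    (K : Matrix (Fin n) (Fin 2) ℝ) (Lam : Fin 2 → ℝ)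
    (P : Matrix (Fin n) (Fin p) ℝ)
    (hU : Uᵀ * U = 1) (hP : Pᵀ * P = 1) (hPU : Pᵀ * U = 0)
    (R : Matrix (Fin n) (Fin 2) ℝ) (hR : R = (1 - U * Uᵀ) * K)
    (hspan : K - U * (Uᵀ * K) = P * (Pᵀ * R)) :
    η • (U * Matrix.diagonal Pi * Uᵀ) + K * Matrix.diagonal Lam * Kᵀ =
      fromCols U P *
        (Matrix.fromBlocks (η • Matrix.diagonal Pi) 0 0 0 +
          fromRows (Uᵀ * K) (Pᵀ * R) * Matrix.diagonal Lam * (fromRows (Uᵀ * K) (Pᵀ * R))ᵀ) *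
        (fromCols U P)ᵀ := by
  have hK : fromCols U P * fromRows (Uᵀ * K) (Pᵀ * R) = K := by
    rw [fromCols_mul_fromRows]
    rw [← hspan]; abel
  have hKT : (fromRows (Uᵀ * K) (Pᵀ * R))ᵀ * (fromCols U P)ᵀ = Kᵀ := by
    rw [← transpose_mul, hK]
  rw [Matrix.mul_add, Matrix.add_mul]
  congr 1
  · rw [fromCols_mul_fromBlocks, transpose_fromCols, fromCols_mul_fromRows]
    simp [Matrix.mul_smul, Matrix.smul_mul, Matrix.mul_assoc]
  · symm
    calc fromCols U P * (fromRows (Uᵀ * K) (Pᵀ * R) * diagonal Lam *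
        (fromRows (Uᵀ * K) (Pᵀ * R))ᵀ) * (fromCols U P)ᵀ
        = (fromCols U P * fromRows (Uᵀ * K) (Pᵀ * R)) * diagonal Lam *
          ((fromRows (Uᵀ * K) (Pᵀ * R))ᵀ * (fromCols U P)ᵀ) := by
          simp only [Matrix.mul_assoc]
    _ = K * diagonal Lam * Kᵀ := by rw [hK, hKT, Matrix.mul_assoc]
end
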